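/- Let $r\geq 2$ and $m\in\mathbb{N}$. Define $\nabla^m\delta\in l_0(\mathbb{Z})$ by $\widehat{\nabla^m\delta}(\xi)=(1-e^{-i\xi})^m$, and let $E_{\nabla^m\delta;r}(\xi)$ be the $r\times r$ matrix whose $(l,k)$-entry is $\widehat{(\nabla^m\delta)^{[k-l;r]}}(\xi)$, where $v^{[\gamma;r]}(j):=v(\gamma+rj)$. Then $\det(E_{\nabla^m\delta;r}(\xi))=(1-e^{-i\xi})^m$ for all $\xi\in\mathbb{R}$. In particular, $E_{\nabla^m\delta;r}(\xi)$ is invertible for all $\xi\in\mathbb{R}\setminus 2\pi\mathbb{Z}$. -/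

import Mathlib

open Pointwise


/-- The scalar coset symbol `û^{[γ;d]}(ξ) = ∑ₖ u(γ + dk) e^{-ikξ}`. -/
noncomputable def cosetSym (u : ℤ →₀ ℂ) (γ d : ℤ) (ξ : ℝ) : ℂ :=
  ∑ j ∈ u.support, if d ∣ (j - γ) then
    u j * Complex.exp (-Complex.I * (((j - γ) / d : ℤ) : ℂ) * (ξ : ℂ)) else 0

/-- The filter `∇^m δ`, with symbol `(1 - e^{-iξ})^m`; its coefficients are
`(-1)^k (m choose k)` at `k = 0, …, m`. -/
noncomputable def nablaDelta (m : ℕ) : ℤ →₀ ℂ :=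
  ∑ k ∈ Finset.range (m + 1), Finsupp.single (k : ℤ) ((-1 : ℂ) ^ k * (m.choose k))

/-- elementary exponential kernel -/
noncomputable def cE (r : ℤ) (ξ : ℝ) (x : ℤ) : ℂ :=
  if r ∣ x then Complex.exp (-Complex.I * ((x / r : ℤ) : ℂ) * (ξ : ℂ)) else 0

lemma dvd_small {r x : ℤ} (h : r ∣ x) (h1 : -r < x) (h2 : x < r) : x = 0 :=
  Int.eq_zero_of_dvd_of_natAbs_lt_natAbs h (by omega)

lemma cE_zero (r : ℤ) (ξ : ℝ) : cE r ξ 0 = 1 := by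
  simp [cE]

lemma cE_self {r : ℤ} (hr : r ≠ 0) (ξ : ℝ) : cE r ξ r = Complex.exp (-Complex.I * (ξ : ℂ)) := by
  simp [cE, Int.ediv_self hr]

lemma cE_not_dvd {r x : ℤ} (h : ¬ r ∣ x) (ξ : ℝ) : cE r ξ x = 0 := by
  simp [cE, h]

lemma cE_add_of_dvd {r x : ℤ} (hr : r ≠ 0) (hx : r ∣ x) (y : ℤ) (ξ : ℝ) :
    cE r ξ (x + y) = cE r ξ x * cE r ξ y := by
  by_cases hy : r ∣ y
  · obtain ⟨a, rfl⟩ := hx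
    obtain ⟨b, rfl⟩ := hy
    have h1 : (r * a + r * b) / r = a + b := by
      rw [← mul_add, Int.mul_ediv_cancel_left _ hr]
    have h2 : (r * a) / r = a := Int.mul_ediv_cancel_left _ hr
    have h3 : (r * b) / r = b := Int.mul_ediv_cancel_left _ hr
    simp only [cE, if_pos (Dvd.intro _ rfl), if_pos (dvd_add (Dvd.intro _ rfl) (Dvd.intro _ rfl)),
      h1, h2, h3, ← Complex.exp_add]
    congr 1
    push_cast
    ring
  · have hxy : ¬ r ∣ (x + y) := fun h => hy ((dvd_add_right hx).mp h)
    rw [cE_not_dvd hy, cE_not_dvd hxy, mul_zero]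

lemma cosetSym_eq_sum (u : ℤ →₀ ℂ) (γ d : ℤ) (ξ : ℝ) (s : Finset ℤ) (hs : u.support ⊆ s) :
    cosetSym u γ d ξ = ∑ j ∈ s, u j * cE d ξ (j - γ) := by
  rw [cosetSym, Finset.sum_subset hs]
  · exact Finset.sum_congr rfl fun j _ => by simp [cE, mul_ite]
  · intro j _ hj
    simp [Finsupp.notMem_support_iff.mp hj]
lemma sum_swap₃ {α β γ M : Type*} [AddCommMonoid M] (s : Finset α) (t : Finset β) (w : Finset γ)
    (f : α → β → γ → M) :
    ∑ x ∈ s, ∑ y ∈ t, ∑ z ∈ w, f x y z = ∑ y ∈ t, ∑ z ∈ w, ∑ x ∈ s, f x y z := by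
  rw [Finset.sum_comm]
  exact Finset.sum_congr rfl fun _ _ => Finset.sum_comm

lemma cE_conv (r : ℕ) (hr : 0 < r) (ξ : ℝ) (c d : ℤ) :
    ∑ s : Fin r, cE r ξ (c - ((s : ℕ) : ℤ)) * cE r ξ (d + ((s : ℕ) : ℤ)) = cE r ξ (c + d) := by
  have hr' : (r : ℤ) ≠ 0 := by exact_mod_cast hr.ne'
  have hrr : (0:ℤ) < r := by exact_mod_cast hr
  have h1 : 0 ≤ c % r := Int.emod_nonneg c hr'
  have h2 : c % r < r := Int.emod_lt_of_pos c hrr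
  have hmem : (c % r).toNat < r := by omega
  set s₀ : Fin r := ⟨(c % r).toNat, hmem⟩ with hs₀
  have hv : ((s₀ : ℕ) : ℤ) = c % r := by
    simp only [hs₀]
    omega
  have hdvd : (r : ℤ) ∣ c - ((s₀ : ℕ) : ℤ) := by
    rw [hv]; exact Int.dvd_self_sub_of_emod_eq rfl
  rw [Finset.sum_eq_single s₀]
  · rw [← cE_add_of_dvd hr' hdvd, show c - ((s₀:ℕ):ℤ) + (d + ((s₀:ℕ):ℤ)) = c + d by ring]
  · intro s _ hs
    have hnd : ¬ (r:ℤ) ∣ c - ((s:ℕ):ℤ) := by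
      intro hd
      have h3 : (r:ℤ) ∣ ((s:ℕ):ℤ) - ((s₀:ℕ):ℤ) := by
        have h4 := dvd_sub hd hdvd
        rw [show c - ((s:ℕ):ℤ) - (c - ((s₀:ℕ):ℤ)) = -(((s:ℕ):ℤ) - ((s₀:ℕ):ℤ)) by ring] at h4
        exact dvd_neg.mp h4
      have hb1 : (s:ℕ) < r := s.isLt
      have hb2 : (s₀:ℕ) < r := s₀.isLt
      have h5 := dvd_small h3 (by omega) (by omega)
      exact hs (Fin.ext (by omega))
    rw [cE_not_dvd hnd, zero_mul]
  · intro h; exact absurd (Finset.mem_univ s₀) h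

noncomputable def cmat (r : ℕ) (ξ : ℝ) (u : ℤ →₀ ℂ) : Matrix (Fin r) (Fin r) ℂ :=
  Matrix.of fun l k : Fin r => cosetSym u (((k : ℕ) : ℤ) - ((l : ℕ) : ℤ)) (r : ℤ) ξ

lemma cmat_mul (r : ℕ) (hr : 0 < r) (ξ : ℝ) (u v : AddMonoidAlgebra ℂ ℤ) :
    cmat r ξ (u * v).coeff = cmat r ξ u.coeff * cmat r ξ v.coeff := by
  ext l k
  have hsub : (u * v).coeff.support ⊆ u.coeff.support + v.coeff.support := AddMonoidAlgebra.support_coeff_mul_subset u v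
  rw [Matrix.mul_apply]
  show cosetSym (u*v).coeff ((((k:ℕ):ℤ)) - ((l:ℕ):ℤ)) r ξ = ∑ s : Fin r,
    cosetSym u.coeff (((s:ℕ):ℤ) - ((l:ℕ):ℤ)) r ξ * cosetSym v.coeff (((k:ℕ):ℤ) - ((s:ℕ):ℤ)) r ξ
  have L : cosetSym (u*v).coeff ((((k:ℕ):ℤ)) - ((l:ℕ):ℤ)) r ξ = ∑ a ∈ u.coeff.support, ∑ b ∈ v.coeff.support,
      u.coeff a * v.coeff b * cE r ξ (a + b - (((k:ℕ):ℤ) - ((l:ℕ):ℤ))) := by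
    rw [cosetSym_eq_sum (u*v).coeff _ _ _ _ hsub]
    have step : ∀ j ∈ u.coeff.support + v.coeff.support, (u*v).coeff j * cE r ξ (j - (((k:ℕ):ℤ) - ((l:ℕ):ℤ)))
        = ∑ a ∈ u.coeff.support, ∑ b ∈ v.coeff.support,
            (if a + b = j then u.coeff a * v.coeff b * cE r ξ (j - (((k:ℕ):ℤ) - ((l:ℕ):ℤ))) else 0) := by
      intro j _
      rw [AddMonoidAlgebra.coeff_mul, Finsupp.sum, Finset.sum_mul]
      refine Finset.sum_congr rfl fun a _ => ?_
      rw [Finsupp.sum, Finset.sum_mul]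
      refine Finset.sum_congr rfl fun b _ => ?_
      rw [ite_mul, zero_mul, mul_assoc]
    rw [Finset.sum_congr rfl step, sum_swap₃]
    refine Finset.sum_congr rfl fun a ha => Finset.sum_congr rfl fun b hb => ?_
    rw [Finset.sum_ite_eq (u.coeff.support + v.coeff.support) (a + b)
      (fun j => u.coeff a * v.coeff b * cE r ξ (j - (((k:ℕ):ℤ) - ((l:ℕ):ℤ)))),
      if_pos (Finset.add_mem_add ha hb)]
  rw [L]
  have R : ∀ s : Fin r, cosetSym u.coeff (((s:ℕ):ℤ) - ((l:ℕ):ℤ)) r ξ * cosetSym v.coeff (((k:ℕ):ℤ) - ((s:ℕ):ℤ)) r ξ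
      = ∑ a ∈ u.coeff.support, ∑ b ∈ v.coeff.support,
          (u.coeff a * v.coeff b) * (cE r ξ ((a + ((l:ℕ):ℤ)) - ((s:ℕ):ℤ)) * cE r ξ ((b - ((k:ℕ):ℤ)) + ((s:ℕ):ℤ))) := by
    intro s
    rw [cosetSym_eq_sum u.coeff _ _ _ _ le_rfl, cosetSym_eq_sum v.coeff _ _ _ _ le_rfl, Finset.sum_mul_sum]
    refine Finset.sum_congr rfl fun a _ => Finset.sum_congr rfl fun b _ => ?_
    rw [show (a:ℤ) - (((s:ℕ):ℤ) - ((l:ℕ):ℤ)) = (a + ((l:ℕ):ℤ)) - ((s:ℕ):ℤ) by ring,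
      show (b:ℤ) - (((k:ℕ):ℤ) - ((s:ℕ):ℤ)) = (b - ((k:ℕ):ℤ)) + ((s:ℕ):ℤ) by ring]
    ring
  rw [Finset.sum_congr rfl (fun s _ => R s), sum_swap₃]
  refine Finset.sum_congr rfl fun a ha => Finset.sum_congr rfl fun b hb => ?_
  rw [← Finset.mul_sum, cE_conv r hr ξ (a + ((l:ℕ):ℤ)) (b - ((k:ℕ):ℤ)),
    show a + ((l:ℕ):ℤ) + (b - ((k:ℕ):ℤ)) = a + b - (((k:ℕ):ℤ) - ((l:ℕ):ℤ)) by ring]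

lemma cmat_one (r : ℕ) (ξ : ℝ) : cmat r ξ (1 : AddMonoidAlgebra ℂ ℤ).coeff = 1 := by
  ext l k
  show cosetSym (Finsupp.single 0 1) (((k:ℕ):ℤ) - ((l:ℕ):ℤ)) r ξ = (1 : Matrix (Fin r) (Fin r) ℂ) l k
  rw [cosetSym_eq_sum _ _ _ _ {0} Finsupp.support_single_subset, Matrix.one_apply]
  simp only [Finset.sum_singleton, Finsupp.single_eq_same, one_mul, zero_sub]
  by_cases h : l = k
  · subst h
    rw [if_pos rfl, show -(((l:ℕ):ℤ) - ((l:ℕ):ℤ)) = 0 by ring, cE_zero]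
  · rw [if_neg h]
    apply cE_not_dvd
    intro hd
    have hb1 : (l:ℕ) < r := l.isLt
    have hb2 : (k:ℕ) < r := k.isLt
    have h5 := dvd_small hd (by omega) (by omega)
    exact h (Fin.ext (by omega))

lemma cmat_pow (r : ℕ) (hr : 0 < r) (ξ : ℝ) (u : AddMonoidAlgebra ℂ ℤ) (n : ℕ) :
    cmat r ξ (u ^ n).coeff = cmat r ξ u.coeff ^ n := by
  induction n with
  | zero => simpa using cmat_one r ξ
  | succ n ih => rw [pow_succ, pow_succ, cmat_mul r hr, ih]

def toAMA (u : ℤ →₀ ℂ) : AddMonoidAlgebra ℂ ℤ := AddMonoidAlgebra.ofCoeff u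

lemma nablaDelta_eq_pow (m : ℕ) : toAMA (nablaDelta m) = toAMA (nablaDelta 1) ^ m := by
  have h1 : toAMA (nablaDelta 1) = AddMonoidAlgebra.single (1:ℤ) (-1:ℂ) + 1 := by
    rw [AddMonoidAlgebra.one_def]
    show AddMonoidAlgebra.ofCoeff (nablaDelta 1) = AddMonoidAlgebra.ofCoeff (Finsupp.single (1:ℤ) (-1:ℂ) + Finsupp.single (0:ℤ) (1:ℂ))
    congr 1
    rw [nablaDelta, Finset.sum_range_succ, Finset.sum_range_one]
    rw [show ((-1:ℂ)^0 * ((1:ℕ).choose 0 : ℂ)) = 1 by norm_num,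
      show ((-1:ℂ)^1 * ((1:ℕ).choose 1 : ℂ)) = -1 by norm_num, add_comm]
    norm_num
  rw [h1, add_pow]
  simp only [one_pow, mul_one]
  have h2 : ∀ k : ℕ, AddMonoidAlgebra.single (1:ℤ) (-1:ℂ) ^ k * ((m.choose k : ℕ) : AddMonoidAlgebra ℂ ℤ)
      = AddMonoidAlgebra.single ((k:ℕ):ℤ) ((-1:ℂ)^k * ((m.choose k : ℕ):ℂ)) := by
    intro k
    rw [AddMonoidAlgebra.single_pow, AddMonoidAlgebra.natCast_def, AddMonoidAlgebra.single_mul_single]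
    congr 1
    all_goals simp
  rw [Finset.sum_congr rfl fun k _ => h2 k]
  show AddMonoidAlgebra.ofCoeff (nablaDelta m) = _
  rw [nablaDelta, AddMonoidAlgebra.ofCoeff_sum]
  rfl
lemma entry_one (r : ℕ) (hr : 2 ≤ r) (ξ : ℝ) (l k : Fin r) :
    cmat r ξ (nablaDelta 1) l k =
      (if (k:ℕ) = (l:ℕ) then 1 else 0) - (if (k:ℕ) = (l:ℕ)+1 then 1 else 0)
      - (if ((l:ℕ) = r-1 ∧ (k:ℕ) = 0) then Complex.exp (-Complex.I * (ξ:ℂ)) else 0) := by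
  have hb1 : (l:ℕ) < r := l.isLt
  have hb2 : (k:ℕ) < r := k.isLt
  have hval0 : (nablaDelta 1) 0 = 1 := by
    rw [nablaDelta, Finset.sum_range_succ, Finset.sum_range_one, Finsupp.add_apply,
      Finsupp.single_apply, Finsupp.single_apply]
    norm_num
  have hval1 : (nablaDelta 1) 1 = -1 := by
    rw [nablaDelta, Finset.sum_range_succ, Finset.sum_range_one, Finsupp.add_apply,
      Finsupp.single_apply, Finsupp.single_apply]
    norm_num
  have hsupp : (nablaDelta 1).support ⊆ ({0, 1} : Finset ℤ) := by
    rw [nablaDelta, Finset.sum_range_succ, Finset.sum_range_one]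
    exact Finsupp.support_add.trans (Finset.union_subset
      (Finsupp.support_single_subset.trans (by norm_num))
      (Finsupp.support_single_subset.trans (by norm_num)))
  show cosetSym (nablaDelta 1) (((k:ℕ):ℤ) - ((l:ℕ):ℤ)) r ξ = _
  rw [cosetSym_eq_sum _ _ _ _ _ hsupp]
  rw [show ({0,1} : Finset ℤ) = insert 0 {1} from rfl, Finset.sum_insert (by norm_num),
    Finset.sum_singleton, hval0, hval1, one_mul]
  set γ : ℤ := ((k:ℕ):ℤ) - ((l:ℕ):ℤ) with hγ
  have hcE0 : cE r ξ (0 - γ) = (if (k:ℕ) = (l:ℕ) then 1 else 0) := by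
    by_cases hkl : (k:ℕ) = (l:ℕ)
    · rw [if_pos hkl, show (0:ℤ) - γ = 0 by rw [hγ]; omega, cE_zero]
    · rw [if_neg hkl]
      apply cE_not_dvd
      intro hd
      have h5 := dvd_small hd (by rw [hγ]; omega) (by rw [hγ]; omega)
      rw [hγ] at h5; omega
  have hcE1 : cE r ξ (1 - γ) = (if (k:ℕ) = (l:ℕ)+1 then 1 else 0)
      + (if ((l:ℕ) = r-1 ∧ (k:ℕ) = 0) then Complex.exp (-Complex.I * (ξ:ℂ)) else 0) := by
    by_cases h1 : (k:ℕ) = (l:ℕ)+1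
    · rw [show (1:ℤ) - γ = 0 by rw [hγ]; omega, cE_zero, if_pos h1, if_neg (by omega), add_zero]
    · by_cases h2 : (l:ℕ) = r-1 ∧ (k:ℕ) = 0
      · rw [show (1:ℤ) - γ = (r:ℤ) by rw [hγ]; omega, cE_self (by exact_mod_cast (by omega : r ≠ 0)),
          if_neg h1, if_pos h2, zero_add]
      · rw [if_neg h1, if_neg h2, add_zero]
        apply cE_not_dvd
        intro hd
        by_cases h3 : (1:ℤ) - γ ≤ 0
        · have h5 := dvd_small hd (by rw [hγ] at h3 ⊢; omega) (by rw [hγ]; omega)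
          rw [hγ] at h5; omega
        · have hd2 : (r:ℤ) ∣ (1 - γ - r) := dvd_sub hd dvd_rfl
          have h5 := dvd_small hd2 (by rw [hγ] at h3 ⊢; omega) (by rw [hγ]; omega)
          rw [hγ] at h5; omega
  rw [hcE0, hcE1]
  ring

lemma det_base (r : ℕ) (hr : 2 ≤ r) (ξ : ℝ) :
    (cmat r ξ (nablaDelta 1)).det = 1 - Complex.exp (-Complex.I * (ξ:ℂ)) := by
  obtain ⟨n, rfl⟩ : ∃ n, r = n + 2 := ⟨r - 2, by omega⟩
  set A := cmat (n+2) ξ (nablaDelta 1) with hA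
  have hAe : ∀ l k : Fin (n+2), A l k =
      (if (k:ℕ) = (l:ℕ) then 1 else 0) - (if (k:ℕ) = (l:ℕ)+1 then 1 else 0)
      - (if ((l:ℕ) = (n+2)-1 ∧ (k:ℕ) = 0) then Complex.exp (-Complex.I * (ξ:ℂ)) else 0) := by
    rw [hA]
    exact entry_one (n+2) hr ξ
  rw [show A.det = ∑ i : Fin (n+2), (-1)^(i:ℕ) * A i 0 * (A.submatrix i.succAbove Fin.succ).det
    from Matrix.det_succ_column_zero A]
  have hminor0 : (A.submatrix (0 : Fin (n+2)).succAbove Fin.succ).det = 1 := by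
    have htri : (A.submatrix (0 : Fin (n+2)).succAbove Fin.succ).BlockTriangular id := by
      intro a b hba
      simp only [Matrix.submatrix_apply, Fin.zero_succAbove]
      rw [hAe]
      have h1 : (b.succ : ℕ) = b + 1 := rfl
      have h2 : (a.succ : ℕ) = a + 1 := rfl
      have hba' : (b:ℕ) < (a:ℕ) := hba
      rw [if_neg (by omega), if_neg (by omega), if_neg (by omega)]
      ring
    rw [Matrix.det_of_upperTriangular htri]
    refine Finset.prod_eq_one fun a _ => ?_
    simp only [Matrix.submatrix_apply, Fin.zero_succAbove]
    rw [hAe]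
    have h2 : (a.succ : ℕ) = a + 1 := rfl
    have h3 : (a.succ : ℕ) < n + 2 := a.succ.isLt
    rw [if_pos rfl, if_neg (by omega), if_neg (by omega)]
    ring
  have hminorL : (A.submatrix (Fin.last (n+1)).succAbove Fin.succ).det = (-1)^(n+1) := by
    have htri : (A.submatrix (Fin.last (n+1)).succAbove Fin.succ).BlockTriangular OrderDual.toDual := by
      intro a b hba
      simp only [Matrix.submatrix_apply, Fin.succAbove_last]
      rw [hAe]
      have h1 : (b.succ : ℕ) = b + 1 := rfl
      have h2 : (a.castSucc : ℕ) = a := rfl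
      have hba' : (a:ℕ) < (b:ℕ) := hba
      have h3 : (a:ℕ) < n + 1 := a.isLt
      rw [if_neg (by omega), if_neg (by omega), if_neg (by omega)]
      ring
    rw [Matrix.det_of_lowerTriangular _ htri]
    have hdiag : ∀ a : Fin (n+1), (A.submatrix (Fin.last (n+1)).succAbove Fin.succ) a a = -1 := by
      intro a
      simp only [Matrix.submatrix_apply, Fin.succAbove_last]
      rw [hAe]
      have h1 : (a.succ : ℕ) = a + 1 := rfl
      have h2 : (a.castSucc : ℕ) = a := rfl
      have h3 : (a:ℕ) < n + 1 := a.isLt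
      rw [if_neg (by omega), if_pos (by omega), if_neg (by omega)]
      ring
    rw [Finset.prod_congr rfl fun a _ => hdiag a, Finset.prod_const, Finset.card_univ,
      Fintype.card_fin]
  have hA00 : A 0 0 = 1 := by
    rw [hAe]
    have h0 : ((0 : Fin (n+2)) : ℕ) = 0 := rfl
    rw [if_pos rfl, if_neg (by omega), if_neg (by omega)]
    ring
  have hAL0 : A (Fin.last (n+1)) 0 = -Complex.exp (-Complex.I * (ξ:ℂ)) := by
    rw [hAe]
    have h0 : ((0 : Fin (n+2)) : ℕ) = 0 := rfl
    have hL : ((Fin.last (n+1) : Fin (n+2)) : ℕ) = n + 1 := rfl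
    rw [if_neg (by omega), if_neg (by omega), if_pos (by omega)]
    ring
  have hzero : ∀ i : Fin (n+2), i ≠ 0 → i ≠ Fin.last (n+1) → A i 0 = 0 := by
    intro i hi0 hiL
    rw [hAe]
    have h0 : ((0 : Fin (n+2)) : ℕ) = 0 := rfl
    have h1 : (i : ℕ) ≠ 0 := fun h => hi0 (Fin.ext h)
    have h2 : (i : ℕ) ≠ n + 1 := fun h => hiL (Fin.ext h)
    rw [if_neg (by omega), if_neg (by omega), if_neg (by omega)]
    ring
  have hsplit : ∀ i : Fin (n+2), (-1:ℂ)^(i:ℕ) * A i 0 * (A.submatrix i.succAbove Fin.succ).det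
      = (if i = 0 then (-1:ℂ)^(i:ℕ) * A i 0 * (A.submatrix i.succAbove Fin.succ).det else 0)
      + (if i = Fin.last (n+1) then (-1:ℂ)^(i:ℕ) * A i 0 * (A.submatrix i.succAbove Fin.succ).det else 0) := by
    intro i
    by_cases hi0 : i = 0
    · have : i ≠ Fin.last (n+1) := by
        rw [hi0]
        intro h
        have := congrArg Fin.val h
        simp at this
      rw [if_pos hi0, if_neg this, add_zero]
    · by_cases hiL : i = Fin.last (n+1)
      · rw [if_neg hi0, if_pos hiL, zero_add]
      · rw [if_neg hi0, if_neg hiL, hzero i hi0 hiL, add_zero]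
        ring
  rw [Finset.sum_congr rfl fun i _ => hsplit i, Finset.sum_add_distrib,
    Finset.sum_ite_eq' Finset.univ (0 : Fin (n+2)), Finset.sum_ite_eq' Finset.univ (Fin.last (n+1))]
  rw [if_pos (Finset.mem_univ _), if_pos (Finset.mem_univ _), hA00, hAL0, hminor0, hminorL]
  have hL : ((Fin.last (n+1) : Fin (n+2)) : ℕ) = n + 1 := rfl
  rw [hL]
  have h0 : (((0 : Fin (n+2))) : ℕ) = 0 := rfl
  rw [h0, pow_zero]
  have hsq : ((-1:ℂ)^(n+1)) * ((-1:ℂ)^(n+1)) = 1 := by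
    rw [← mul_pow]
    norm_num
  calc 1 * 1 * 1 + (-1:ℂ)^(n+1) * (-Complex.exp (-Complex.I * (ξ:ℂ))) * (-1)^(n+1)
      = 1 - ((-1:ℂ)^(n+1) * (-1:ℂ)^(n+1)) * Complex.exp (-Complex.I * (ξ:ℂ)) := by ring
    _ = 1 - Complex.exp (-Complex.I * (ξ:ℂ)) := by rw [hsq, one_mul]


/-- The determinant of the `r × r` coset matrix `E_{∇^m δ; r}(ξ)` (with `(l,k)`-entry the
symbol of the `(k-l)`-coset of `∇^m δ`) equals `(1 - e^{-iξ})^m`; in particular the matrix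
is invertible for all `ξ ∉ 2πℤ`. -/
theorem det_coset_matrix_nabla (r : ℕ) (hr : 2 ≤ r) (m : ℕ) (hm : 1 ≤ m) :
    (∀ ξ : ℝ, (Matrix.of fun l k : Fin r =>
        cosetSym (nablaDelta m) (((k : ℕ) : ℤ) - ((l : ℕ) : ℤ)) (r : ℤ) ξ).det
      = (1 - Complex.exp (-Complex.I * (ξ : ℂ))) ^ m) ∧
    (∀ ξ : ℝ, (¬ ∃ k : ℤ, ξ = 2 * Real.pi * k) →
      IsUnit (Matrix.of fun l k : Fin r =>
        cosetSym (nablaDelta m) (((k : ℕ) : ℤ) - ((l : ℕ) : ℤ)) (r : ℤ) ξ)) := by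
  have hdet : ∀ ξ : ℝ, (Matrix.of fun l k : Fin r =>
      cosetSym (nablaDelta m) (((k : ℕ) : ℤ) - ((l : ℕ) : ℤ)) (r : ℤ) ξ).det
      = (1 - Complex.exp (-Complex.I * (ξ : ℝ))) ^ m := by
    intro ξ
    show (cmat r ξ (toAMA (nablaDelta m)).coeff).det = _
    rw [nablaDelta_eq_pow, cmat_pow r (by omega) ξ, Matrix.det_pow,
      show cmat r ξ (toAMA (nablaDelta 1)).coeff = cmat r ξ (nablaDelta 1) from rfl, det_base r hr ξ]
  refine ⟨hdet, fun ξ hξ => ?_⟩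
  rw [Matrix.isUnit_iff_isUnit_det, hdet ξ]
  refine isUnit_iff_ne_zero.mpr (pow_ne_zero _ ?_)
  intro h
  have hexp : Complex.exp (-Complex.I * (ξ:ℂ)) = 1 := by linear_combination -h
  rw [Complex.exp_eq_one_iff] at hexp
  obtain ⟨n, hn⟩ := hexp
  apply hξ
  refine ⟨-n, ?_⟩
  have h2 : Complex.I * ((ξ:ℂ) - ((2 * Real.pi * ((-n : ℤ) : ℝ) : ℝ) : ℂ)) = 0 := by
    push_cast
    linear_combination -hn
  rcases mul_eq_zero.mp h2 with h3 | h3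
  · exact absurd h3 Complex.I_ne_zero
  · have h4 : (ξ:ℂ) = ((2 * Real.pi * ((-n : ℤ) : ℝ) : ℝ) : ℂ) := sub_eq_zero.mp h3
    exact_mod_cast h4
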